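/- Let λ = (i, 1, 1, ..., 1) be a partition of n with first part i, and let z ∈ S_n be an element such that for any simple reflection s, sz < z iff s = s_i and zs < z iff s = s_i. Then there exists j with 0 ≤ j ≤ i - 1 such that z = (s_i s_{i-1} ⋯ s_{i-j})(s_{i+1} s_i ⋯ s_{i-j+1}) ⋯ (s_{i+j} s_{i+j-1} ⋯ s_i), and this expression is reduced, so l(z) = (j+1)^2. -/

import Mathlib

set_option linter.unusedSectionVars false
set_option linter.unusedVariables false
set_option maxHeartbeats 1000000



/-- `⟨i mod n⟩` as an element of `Fin n`. -/
def finOf (n : ℕ) [NeZero n] (i : ℕ) : Fin n := ⟨i % n, Nat.mod_lt _ (NeZero.pos n)⟩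

/-- The simple reflection `s_j = (j, j+1)` of the symmetric group `S_n`
(1-indexed, `j = 1, …, n-1`), written 0-indexed as the swap of `j-1` and `j`. -/
def sNp (n : ℕ) [NeZero n] (j : ℕ) : Equiv.Perm (Fin n) :=
  Equiv.swap (finOf n (j - 1)) (finOf n j)

/-- The Coxeter length function on `S_n` with respect to the simple reflections
`s_1, …, s_{n-1}`: the minimal length of an expression of `w` as a product of
adjacent transpositions. -/
noncomputable def lenS (n : ℕ) [NeZero n] (w : Equiv.Perm (Fin n)) : ℕ :=
  sInf {m | ∃ l : List ℕ, (∀ j ∈ l, 1 ≤ j ∧ j ≤ n - 1) ∧ l.length = m ∧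
    (l.map (sNp n)).prod = w}

section Inv
variable (n : ℕ) [NeZero n]

def invCount (w : Equiv.Perm (Fin n)) : ℕ :=
  (Finset.univ.filter (fun p : Fin n × Fin n => p.1 < p.2 ∧ w p.2 < w p.1)).card

/-- `w` as a function on `ℕ` (identity outside `[0, n)`). -/
def pf (w : Equiv.Perm (Fin n)) : ℕ → ℕ :=
  fun k => if h : k < n then (w ⟨k, h⟩ : ℕ) else k

variable {n}

lemma sNp_eq_swap {c : ℕ} (hc1 : 1 ≤ c) (hc2 : c ≤ n - 1) :
    sNp n c = Equiv.swap ⟨c - 1, by omega⟩ ⟨c, by omega⟩ := by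
  have hn := NeZero.pos n
  unfold sNp finOf
  have h1 : (c - 1) % n = c - 1 := Nat.mod_eq_of_lt (by omega)
  have h2 : c % n = c := Nat.mod_eq_of_lt (by omega)
  congr 1 <;> exact Fin.ext (by simp [h1, h2])

lemma pf_lt {w : Equiv.Perm (Fin n)} {k : ℕ} (h : k < n) : pf n w k < n := by
  simp [pf, h]

lemma pf_pf {w : Equiv.Perm (Fin n)} {k : ℕ} (h : k < n) :
    pf n w⁻¹ (pf n w k) = k := by
  simp [pf, h, pf_lt h]

lemma pf_inj {w : Equiv.Perm (Fin n)} {k l : ℕ} (hk : k < n) (hl : l < n)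
    (h : pf n w k = pf n w l) : k = l := by
  have := pf_pf (w := w) hk
  have := pf_pf (w := w) hl
  rw [h] at *; omega

lemma chain_add {g : ℕ → ℕ} {lo hi : ℕ} (h : ∀ k, lo ≤ k → k + 1 ≤ hi → g k < g (k + 1)) :
    ∀ t k, lo ≤ k → k + t ≤ hi → g k + t ≤ g (k + t) := by
  intro t
  induction t with
  | zero => simp
  | succ t ih =>
      intro k hk hkt
      have h1 := ih k hk (by omega)
      have h2 := h (k + t) (by omega) (by omega)
      show g k + (t + 1) ≤ g (k + t + 1)
      omega

/-- downward closed induction helper -/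
lemma down_closed {P : ℕ → Prop} {lo hi : ℕ} (htop : P hi)
    (hstep : ∀ v, lo ≤ v → v < hi → P (v + 1) → P v) :
    ∀ v, lo ≤ v → v ≤ hi → P v := by
  have key : ∀ t v, lo ≤ v → v + t = hi → P v := by
    intro t
    induction t with
    | zero =>
        intro v _ hv
        have hveq : v = hi := by omega
        rw [hveq]; exact htop
    | succ t ih =>
        intro v hv hvt
        exact hstep v hv (by omega) (ih (v + 1) (by omega) (by omega))
  intro v hv hvh
  exact key (hi - v) v hv (by omega)

lemma swap_adj_lt {a b : Fin n} (hab : (a : ℕ) + 1 = b) {x y : Fin n}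
    (hxy : x < y) (hne : ¬(x = a ∧ y = b)) :
    Equiv.swap a b x < Equiv.swap a b y := by
  have hx := x.isLt; have hy := y.isLt
  simp only [Equiv.swap_apply_def, Fin.lt_def] at *
  split_ifs with h1 h2 h3 h4 h5 <;> simp_all [Fin.ext_iff] <;> omega

private lemma erase_maps {a b : Fin n} (hab : (a : ℕ) + 1 = b) (u : Equiv.Perm (Fin n)) :
    ∀ p ∈ ((Finset.univ.filter
        (fun p : Fin n × Fin n => p.1 < p.2 ∧ u p.2 < u p.1)).erase (a, b)),
      (Equiv.swap a b p.1, Equiv.swap a b p.2) ∈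
        ((Finset.univ.filter (fun p : Fin n × Fin n =>
          p.1 < p.2 ∧ (u * Equiv.swap a b) p.2 < (u * Equiv.swap a b) p.1)).erase (a, b)) := by
  rintro ⟨x, y⟩ hp
  simp only [Finset.mem_erase, Finset.mem_filter, Finset.mem_univ, true_and] at hp ⊢
  obtain ⟨hne, hlt, hinv⟩ := hp
  have hne' : ¬(x = a ∧ y = b) := by
    rintro ⟨rfl, rfl⟩; exact hne rfl
  refine ⟨?_, swap_adj_lt hab hlt hne', ?_⟩
  · rintro h
    have h1 : x = b := by
      have := congrArg Prod.fst h
      simpa using congrArg (Equiv.swap a b) this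
    have h2 : y = a := by
      have := congrArg Prod.snd h
      simpa using congrArg (Equiv.swap a b) this
    have h3 : (x : ℕ) < (y : ℕ) := hlt
    rw [h1, h2] at h3
    omega
  · have key : ∀ t, (u * Equiv.swap a b) (Equiv.swap a b t) = u t := fun t => by
      rw [Equiv.Perm.mul_apply, Equiv.swap_apply_self]
    rw [key, key]; exact hinv

lemma invCount_mul_swap_asc {a b : Fin n} (hab : (a : ℕ) + 1 = b)
    (w : Equiv.Perm (Fin n)) (h : w a < w b) :
    invCount n (w * Equiv.swap a b) = invCount n w + 1 := by
  set s := Equiv.swap a b with hs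
  set F := fun u : Equiv.Perm (Fin n) => (Finset.univ.filter
      (fun p : Fin n × Fin n => p.1 < p.2 ∧ u p.2 < u p.1)) with hF
  have hcard : ((F (w * s)).erase (a, b)).card = ((F w).erase (a, b)).card := by
    apply Finset.card_nbij' (i := fun p => (s p.1, s p.2)) (j := fun p => (s p.1, s p.2))
    · intro p hp
      have h2 : w * s * s = w := by
        ext x; simp [hs, Equiv.Perm.mul_apply]
      have := erase_maps hab (w * s) p hp
      rw [h2] at this
      exact this
    · exact erase_maps hab w
    · intro p hp; simp [hs]
    · intro p hp; simp [hs]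
  have hab' : a < b := Fin.lt_def.mpr (by omega)
  have hmem1 : (a, b) ∈ F (w * s) := by
    simp only [hF, Finset.mem_filter, Finset.mem_univ, true_and]
    refine ⟨hab', ?_⟩
    have e1 : (w * s) b = w a := by
      rw [Equiv.Perm.mul_apply, hs, Equiv.swap_apply_right]
    have e2 : (w * s) a = w b := by
      rw [Equiv.Perm.mul_apply, hs, Equiv.swap_apply_left]
    rw [e1, e2]; exact h
  have hmem2 : (a, b) ∉ F w := by
    simp only [hF, Finset.mem_filter, Finset.mem_univ, true_and, not_and]
    intro _; exact not_lt.2 h.le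
  have e2 : (F w).erase (a, b) = F w := Finset.erase_eq_of_notMem hmem2
  have e1 : ((F (w * s)).erase (a, b)).card + 1 = (F (w * s)).card :=
    Finset.card_erase_add_one hmem1
  show (F (w * s)).card = (F w).card + 1
  have e3 := congrArg Finset.card e2
  omega

lemma invCount_mul_swap_desc {a b : Fin n} (hab : (a : ℕ) + 1 = b)
    (w : Equiv.Perm (Fin n)) (h : w b < w a) :
    invCount n w = invCount n (w * Equiv.swap a b) + 1 := by
  have key := invCount_mul_swap_asc hab (w * Equiv.swap a b) (by
    simpa [Equiv.Perm.mul_apply] using h)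
  have h2 : w * Equiv.swap a b * Equiv.swap a b = w := by
    ext x; simp [Equiv.Perm.mul_apply]
  rwa [h2] at key


lemma invCount_inv {w : Equiv.Perm (Fin n)} : invCount n w⁻¹ = invCount n w := by
  apply Finset.card_nbij' (i := fun p : Fin n × Fin n => (w⁻¹ p.2, w⁻¹ p.1))
    (j := fun p : Fin n × Fin n => (w p.2, w p.1))
  · rintro ⟨x, y⟩ hp
    simp only [Finset.mem_filter, Finset.mem_univ, true_and] at hp ⊢
    exact Finset.mem_filter.2 ⟨Finset.mem_univ _, (Finset.mem_filter.1 hp).2.2, by simpa using (Finset.mem_filter.1 hp).2.1⟩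
  · rintro ⟨x, y⟩ hp
    simp only [Finset.mem_filter, Finset.mem_univ, true_and] at hp ⊢
    exact Finset.mem_filter.2 ⟨Finset.mem_univ _, (Finset.mem_filter.1 hp).2.2, by simpa using (Finset.mem_filter.1 hp).2.1⟩
  · rintro ⟨x, y⟩ _; simp
  · rintro ⟨x, y⟩ _; simp

lemma invCount_one : invCount n (1 : Equiv.Perm (Fin n)) = 0 := by
  rw [invCount, Finset.card_eq_zero, Finset.filter_eq_empty_iff]
  rintro ⟨x, y⟩ _
  simp only [Equiv.Perm.one_apply]
  rintro ⟨h1, h2⟩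
  exact absurd h1 (not_lt.2 h2.le)

/-- if `w` has no descent then `w = 1`. -/
lemma eq_one_of_no_descent {w : Equiv.Perm (Fin n)}
    (h : ∀ k, k + 2 ≤ n → pf n w k < pf n w (k + 1)) : w = 1 := by
  have hchain : ∀ k, 0 ≤ k → k + 1 ≤ n - 1 → pf n w k < pf n w (k + 1) := by
    intro k _ hk; exact h k (by omega)
  have hup : ∀ k, k ≤ n - 1 → pf n w k ≤ k := by
    intro k hk
    have := chain_add hchain (n - 1 - k) k (by omega) (by omega)
    have h2 : k + (n - 1 - k) = n - 1 := by omega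
    rw [h2] at this
    have h3 : pf n w (n - 1) < n := pf_lt (by have := NeZero.pos n; omega)
    omega
  have hlow : ∀ k, k ≤ n - 1 → k ≤ pf n w k := by
    intro k hk
    have := chain_add hchain k 0 (by omega) (by omega)
    simp only [Nat.zero_add] at this
    omega
  ext x
  have hx := x.isLt
  have h1 := hup x (by omega)
  have h2 := hlow x (by omega)
  have : pf n w (x : ℕ) = (w x : ℕ) := by simp [pf, hx]
  simp only [Equiv.Perm.one_apply]
  omega

lemma exists_word (w : Equiv.Perm (Fin n)) :
    ∃ l : List ℕ, (∀ j ∈ l, 1 ≤ j ∧ j ≤ n - 1) ∧ l.length = invCount n w ∧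
      (l.map (sNp n)).prod = w := by
  generalize hm : invCount n w = m
  induction m using Nat.strong_induction_on generalizing w with
  | _ m ih =>
    by_cases hd : ∃ k, k + 2 ≤ n ∧ pf n w (k + 1) < pf n w k
    · obtain ⟨k, hk, hdesc⟩ := hd
      set a : Fin n := ⟨k, by omega⟩ with ha
      set b : Fin n := ⟨k + 1, by omega⟩ with hb
      have hab : (a : ℕ) + 1 = b := rfl
      have hwd : w b < w a := by
        have e1 : pf n w k = (w a : ℕ) := by simp [pf]; rw [dif_pos (by omega)]
        have e2 : pf n w (k + 1) = (w b : ℕ) := by simp [pf]; rw [dif_pos (by omega)]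
        rw [e1, e2] at hdesc
        exact hdesc
      have hkey := invCount_mul_swap_desc hab w hwd
      have hm' : invCount n (w * Equiv.swap a b) = m - 1 := by omega
      have hlt : m - 1 < m := by omega
      obtain ⟨l, hl1, hl2, hl3⟩ := ih (m - 1) hlt (w * Equiv.swap a b) hm'
      refine ⟨l ++ [k + 1], ?_, ?_, ?_⟩
      · intro j hj
        rcases List.mem_append.1 hj with h | h
        · exact hl1 j h
        · simp at h; omega
      · simp [hl2]; omega
      · rw [List.map_append, List.prod_append, hl3]
        simp only [List.map_cons, List.map_nil, List.prod_cons, List.prod_nil, mul_one]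
        rw [sNp_eq_swap (by omega) (by omega)]
        have : (⟨k + 1 - 1, by omega⟩ : Fin n) = a := by ext; simp [ha]
        rw [this]
        have : (⟨k + 1, by omega⟩ : Fin n) = b := rfl
        rw [this]
        rw [mul_assoc]
        simp [Equiv.swap_mul_self]
    · push_neg at hd
      have hw1 : w = 1 := by
        apply eq_one_of_no_descent
        intro k hk
        have h1 := hd k hk
        have h2 : pf n w k ≠ pf n w (k + 1) := by
          intro he
          have := pf_inj (w := w) (by omega) (by omega) he
          omega
        omega
      subst hw1
      rw [invCount_one] at hm
      exact ⟨[], by simp, by simp [← hm], by simp⟩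

lemma invCount_le_word (l : List ℕ) (hl : ∀ j ∈ l, 1 ≤ j ∧ j ≤ n - 1) :
    invCount n ((l.map (sNp n)).prod) ≤ l.length := by
  induction l with
  | nil => simp [invCount_one]
  | cons c l' ih =>
      simp only [List.map_cons, List.prod_cons, List.length_cons]
      have hc := hl c (by simp)
      have hl' : ∀ j ∈ l', 1 ≤ j ∧ j ≤ n - 1 := fun j hj => hl j (by simp [hj])
      have ihl := ih hl'
      set u := (l'.map (sNp n)).prod with hu
      -- invCount (sNp c * u) ≤ invCount u + 1
      set a : Fin n := ⟨c - 1, by omega⟩ with ha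
      set b : Fin n := ⟨c, by omega⟩ with hb
      have hab : (a : ℕ) + 1 = b := by simp [ha, hb]; omega
      have hsnp : sNp n c = Equiv.swap a b := sNp_eq_swap hc.1 hc.2
      have hinv : invCount n (sNp n c * u) = invCount n (u⁻¹ * Equiv.swap a b) := by
        rw [← invCount_inv (w := sNp n c * u)]
        congr 1
        rw [mul_inv_rev, hsnp, Equiv.swap_inv]
      rw [hinv]
      have hne : u⁻¹ a ≠ u⁻¹ b := by
        intro h
        have : a = b := u⁻¹.injective h
        rw [ha, hb] at this
        have := congrArg Fin.val this
        simp at this; omega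
      rcases lt_or_gt_of_ne hne with h | h
      · have := invCount_mul_swap_asc hab u⁻¹ h
        rw [this, invCount_inv]
        omega
      · have := invCount_mul_swap_desc hab u⁻¹ h
        rw [invCount_inv] at this
        omega

lemma lenS_eq_invCount (w : Equiv.Perm (Fin n)) : lenS n w = invCount n w := by
  have hne : {m | ∃ l : List ℕ, (∀ j ∈ l, 1 ≤ j ∧ j ≤ n - 1) ∧ l.length = m ∧
      (l.map (sNp n)).prod = w}.Nonempty := by
    obtain ⟨l, h1, h2, h3⟩ := exists_word w
    exact ⟨invCount n w, l, h1, h2, h3⟩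
  apply le_antisymm
  · obtain ⟨l, h1, h2, h3⟩ := exists_word w
    exact Nat.sInf_le ⟨l, h1, h2, h3⟩
  · obtain ⟨l, h1, h2, h3⟩ := Nat.sInf_mem hne
    calc invCount n w = invCount n ((l.map (sNp n)).prod) := by rw [h3]
    _ ≤ l.length := invCount_le_word l h1
    _ = _ := h2


lemma lenS_right_descent_iff {c : ℕ} (hc1 : 1 ≤ c) (hc2 : c ≤ n - 1)
    (z : Equiv.Perm (Fin n)) :
    (lenS n (z * sNp n c) < lenS n z ↔ pf n z c < pf n z (c - 1)) := by
  set a : Fin n := ⟨c - 1, by omega⟩ with ha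
  set b : Fin n := ⟨c, by omega⟩ with hb
  have hab : (a : ℕ) + 1 = b := by simp [ha, hb]; omega
  have hsnp : sNp n c = Equiv.swap a b := sNp_eq_swap hc1 hc2
  have e1 : pf n z c = (z b : ℕ) := by rw [pf, dif_pos (by omega)]
  have e2 : pf n z (c - 1) = (z a : ℕ) := by rw [pf, dif_pos (by omega)]
  rw [lenS_eq_invCount, lenS_eq_invCount, hsnp, e1, e2]
  have hne : z a ≠ z b := by
    intro h
    have : a = b := z.injective h
    have := congrArg Fin.val this
    simp [ha, hb] at this; omega
  rcases lt_or_gt_of_ne hne with h | h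
  · rw [invCount_mul_swap_asc hab z h]
    have hba : (z a : ℕ) < z b := h
    constructor
    · intro hlt; omega
    · intro hlt; omega
  · have heq := invCount_mul_swap_desc hab z h
    have hba : (z b : ℕ) < z a := h
    constructor
    · intro _; exact hba
    · intro _; omega

lemma lenS_left_descent_iff {c : ℕ} (hc1 : 1 ≤ c) (hc2 : c ≤ n - 1)
    (z : Equiv.Perm (Fin n)) :
    (lenS n (sNp n c * z) < lenS n z ↔ pf n z⁻¹ c < pf n z⁻¹ (c - 1)) := by
  have key : lenS n (sNp n c * z) = lenS n (z⁻¹ * sNp n c) := by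
    rw [lenS_eq_invCount, lenS_eq_invCount, ← invCount_inv (w := sNp n c * z)]
    have e : (sNp n c * z)⁻¹ = z⁻¹ * sNp n c := by
      rw [mul_inv_rev, sNp_eq_swap hc1 hc2, Equiv.swap_inv]
    rw [e]
  have key2 : lenS n z = lenS n z⁻¹ := by
    rw [lenS_eq_invCount, lenS_eq_invCount, invCount_inv]
  rw [key, key2]
  exact lenS_right_descent_iff hc1 hc2 z⁻¹


/-- Pure arithmetic auxiliary lemma about a permutation-like pair `g, g'` of `ℕ`-functions
with unique ascent/descent structure at `i`. -/
lemma comb_aux (n i : ℕ) (hi1 : 1 ≤ i) (hi2 : i + 1 ≤ n) (g g' : ℕ → ℕ)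
    (hglt : ∀ k, k < n → g k < n) (hg'lt : ∀ k, k < n → g' k < n)
    (hgg' : ∀ k, k < n → g' (g k) = k) (hg'g : ∀ k, k < n → g (g' k) = k)
    (hstep : ∀ k, k + 2 ≤ n → (g (k + 1) < g k ↔ k + 1 = i))
    (hstep' : ∀ k, k + 2 ≤ n → (g' (k + 1) < g' k ↔ k + 1 = i)) :
    ∃ j a, a + (j + 1) = i ∧ i + j + 1 ≤ n ∧
      (∀ k, k < a → g k = k) ∧
      (∀ t, t ≤ j → g (a + t) = i + t) ∧
      (∀ k, i + j < k → k < n → g k = k) := by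
  have hginj : ∀ k l, k < n → l < n → g k = g l → k = l := by
    intro k l hk hl h
    have e1 := hgg' k hk
    have e2 := hgg' l hl
    rw [h] at e1; omega
  have hg'inj : ∀ k l, k < n → l < n → g' k = g' l → k = l := by
    intro k l hk hl h
    have e1 := hg'g k hk
    have e2 := hg'g l hl
    rw [h] at e1; omega
  have step_asc : ∀ k, k + 2 ≤ n → k + 1 ≠ i → g k < g (k + 1) := by
    intro k hk hne
    have h1 : ¬ (g (k + 1) < g k) := fun h => hne ((hstep k hk).1 h)
    have h2 : g k ≠ g (k + 1) := fun h => by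
      have := hginj k (k + 1) (by omega) (by omega) h; omega
    omega
  have step_asc' : ∀ k, k + 2 ≤ n → k + 1 ≠ i → g' k < g' (k + 1) := by
    intro k hk hne
    have h1 : ¬ (g' (k + 1) < g' k) := fun h => hne ((hstep' k hk).1 h)
    have h2 : g' k ≠ g' (k + 1) := fun h => by
      have := hg'inj k (k + 1) (by omega) (by omega) h; omega
    omega
  have chain1 : ∀ k, 0 ≤ k → k + 1 ≤ i - 1 → g k < g (k + 1) :=
    fun k _ hk => step_asc k (by omega) (by omega)
  have chain2 : ∀ k, i ≤ k → k + 1 ≤ n - 1 → g k < g (k + 1) :=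
    fun k hk hk2 => step_asc k (by omega) (by omega)
  have chain1' : ∀ k, 0 ≤ k → k + 1 ≤ i - 1 → g' k < g' (k + 1) :=
    fun k _ hk => step_asc' k (by omega) (by omega)
  have chain2' : ∀ k, i ≤ k → k + 1 ≤ n - 1 → g' k < g' (k + 1) :=
    fun k hk hk2 => step_asc' k (by omega) (by omega)
  have chainA1 := chain_add chain1
  have chainA2 := chain_add chain2
  have chainA1' := chain_add chain1'
  have chainA2' := chain_add chain2'
  set m := g (i - 1) with hm
  have hm_lt : m < n := hglt (i - 1) (by omega)
  have hg'm : g' m = i - 1 := hgg' (i - 1) (by omega)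
  have hdes : g i < g (i - 1) := by
    have h := (hstep (i - 1) (by omega)).2 (by omega)
    have e : i - 1 + 1 = i := by omega
    rw [e] at h; exact h
  have hm_ge' : i - 1 ≤ m := by
    have := chainA1 (i - 1) 0 (by omega) (by omega)
    simp only [Nat.zero_add] at this
    omega
  have hm_ge : i ≤ m := by
    by_contra hc
    have hme : m = i - 1 := by omega
    have hid : ∀ k, k ≤ i - 1 → g k = k := by
      intro k hk
      have hu := chainA1 (i - 1 - k) k (by omega) (by omega)
      have e : k + (i - 1 - k) = i - 1 := by omega
      rw [e] at hu
      have hlow := chainA1 k 0 (by omega) (by omega)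
      simp only [Nat.zero_add] at hlow
      omega
    have hv : g i ≤ i - 2 := by
      have := hid (i - 1) (by omega)
      omega
    have := hid (g i) (by omega)
    have := hginj i (g i) (by omega) (by
      have := hglt i (by omega); omega) this.symm
    omega
  -- j and a
  have hAhigh : ∀ v, i ≤ v → v ≤ m → g' v ≤ i - 1 := by
    apply down_closed (P := fun v => g' v ≤ i - 1) (lo := i) (hi := m)
      (by omega : g' m ≤ i - 1)
    intro v hv hvm hnext
    have := step_asc' v (by omega) (by omega)
    omega
  have hjle : m - i ≤ i - 1 ∧ g' i ≤ i - 1 - (m - i) := by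
    have h1 := chainA2' (m - i) i (by omega) (by omega)
    have e : i + (m - i) = m := by omega
    rw [e, hg'm] at h1
    omega
  set j := m - i with hj
  set a := i - 1 - j with ha
  have haj : a + (j + 1) = i := by omega
  have hb : g' i = a := by
    have hble := hjle.2
    have hgb : g (g' i) = i := hg'g i (by omega)
    have h1 := chainA1 (i - 1 - g' i) (g' i) (by omega) (by omega)
    have e : g' i + (i - 1 - g' i) = i - 1 := by omega
    rw [e, hgb] at h1
    omega
  have hga : g a = i := by rw [← hb]; exact hg'g i (by omega)
  have hmid : ∀ t, t ≤ j → g (a + t) = i + t := by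
    intro t ht
    have h1 := chainA1 t a (by omega) (by omega)
    rw [hga] at h1
    have h2 := chainA1 (i - 1 - (a + t)) (a + t) (by omega) (by omega)
    have e : a + t + (i - 1 - (a + t)) = i - 1 := by omega
    rw [e] at h2
    omega
  have hAmid : ∀ v, a ≤ v → v ≤ i - 1 → ¬ (g' v ≤ i - 1) := by
    intro v hva hvi hA
    have hk0v : v ≤ g' v := by
      have := chainA1' v 0 (by omega) (by omega)
      simp only [Nat.zero_add] at this
      omega
    have hgk : g (g' v) = v := hg'g v (by omega)
    have := hmid (g' v - a) (by omega)
    have e : a + (g' v - a) = g' v := by omega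
    rw [e, hgk] at this
    omega
  have hlt_a : ∀ k', k' < a → g k' < a := by
    intro k' hk'
    have h1 := chainA1 (a - k') k' (by omega) (by omega)
    have e : k' + (a - k') = a := by omega
    rw [e, hga] at h1
    by_contra hge
    exact hAmid (g k') (by omega) (by omega) (by rw [hgg' k' (by omega)]; omega)
  have hlow : ∀ k, k < a → g k = k := by
    intro k hk
    have hupk : g k ≤ k := by
      have h1 := chainA1 (a - 1 - k) k (by omega) (by omega)
      have e : k + (a - 1 - k) = a - 1 := by omega
      rw [e] at h1
      have := hlt_a (a - 1) (by omega)
      omega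
    have hlk := chainA1 k 0 (by omega) (by omega)
    simp only [Nat.zero_add] at hlk
    omega
  have hAp : ∀ k, m < k → k < n → ¬ (g k ≤ i - 1) := by
    intro k hk hkn hgk
    have h1 := chainA2 (k - i) i (by omega) (by omega)
    have e : i + (k - i) = k := by omega
    rw [e] at h1
    have hgi_lt : g i < a := by omega
    have h5 := hlow (g i) hgi_lt
    have h6 := hginj (g i) i (by omega) (by omega) h5
    omega
  have hge : ∀ k, m < k → k < n → m + 1 ≤ g k := by
    intro k hk hkn
    have h1 : ¬ (g k ≤ i - 1) := hAp k hk hkn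
    by_contra hc
    have h2 := hAhigh (g k) (by omega) (by omega)
    rw [hgg' k (by omega)] at h2
    omega
  have hhigh : ∀ k, i + j < k → k < n → g k = k := by
    intro k hk hkn
    have hk' : m < k := by omega
    have h1 := chainA2 (k - (m + 1)) (m + 1) (by omega) (by omega)
    have e : m + 1 + (k - (m + 1)) = k := by omega
    rw [e] at h1
    have h2 := hge (m + 1) (by omega) (by omega)
    have h3 := chainA2 (n - 1 - k) k (by omega) (by omega)
    have e2 : k + (n - 1 - k) = n - 1 := by omega
    rw [e2] at h3
    have h4 : g (n - 1) ≤ n - 1 := by have := hglt (n - 1) (by omega); omega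
    omega
  exact ⟨j, a, haj, by omega, hlow, hmid, hhigh⟩


lemma sNp_apply {c : ℕ} (hc1 : 1 ≤ c) (hc2 : c ≤ n - 1) (x : Fin n) :
    ((sNp n c x : Fin n) : ℕ) =
      if (x : ℕ) = c - 1 then c else if (x : ℕ) = c then c - 1 else (x : ℕ) := by
  rw [sNp_eq_swap hc1 hc2]
  have hx := x.isLt
  by_cases h1 : (x : ℕ) = c - 1
  · have hxe : x = (⟨c - 1, by omega⟩ : Fin n) := Fin.ext h1
    rw [hxe, Equiv.swap_apply_left]
    simp [h1]
  · by_cases h2 : (x : ℕ) = c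
    · have hxe : x = (⟨c, by omega⟩ : Fin n) := Fin.ext h2
      rw [hxe, Equiv.swap_apply_right]
      show (c - 1 : ℕ) = if c = c - 1 then c else if c = c then c - 1 else c
      rw [if_neg (by omega), if_pos rfl]
    · rw [Equiv.swap_apply_of_ne_of_ne (fun h => h1 (congrArg Fin.val h))
        (fun h => h2 (congrArg Fin.val h))]
      simp [h1, h2]

lemma run_eval (len : ℕ) : ∀ b, len + 1 ≤ b → b ≤ n - 1 → ∀ x : Fin n,
    ((((List.range (len + 1)).map (fun r => sNp n (b - r))).prod) x : ℕ) =
    if (x : ℕ) = b - len - 1 then b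
    else if b - len ≤ (x : ℕ) ∧ (x : ℕ) ≤ b then (x : ℕ) - 1 else (x : ℕ) := by
  induction len with
  | zero =>
      intro b hb1 hb2 x
      have h1 : List.range 1 = [0] := by simp [List.range_succ]
      rw [h1]
      simp only [List.map_cons, List.map_nil, List.prod_cons, List.prod_nil, mul_one,
        Nat.sub_zero]
      rw [sNp_apply hb1 hb2]
      have hx := x.isLt
      split_ifs <;> omega
  | succ len ih =>
      intro b hb1 hb2 x
      rw [List.range_succ, List.map_append, List.prod_append]
      simp only [List.map_cons, List.map_nil, List.prod_cons, List.prod_nil, mul_one]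
      rw [Equiv.Perm.mul_apply]
      rw [ih b (by omega) hb2]
      rw [sNp_apply (show 1 ≤ b - (len + 1) by omega) (show b - (len + 1) ≤ n - 1 by omega)]
      have hx := x.isLt
      split_ifs <;> omega

def psi (i j v k : ℕ) : ℕ :=
  if i - 1 - j + v ≤ k ∧ k ≤ i - 1 then k + (j + 1)
  else if i ≤ k ∧ k ≤ i + j then k - (j + 1 - v)
  else k

lemma word_eval {i j : ℕ} (hij : j + 1 ≤ i) (hn : i + j + 1 ≤ n) (x : Fin n) :
    ((((List.range (j + 1)).map (fun t =>
        (List.range (j + 1)).map (fun r => i + t - r))).flatten.map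
          (sNp n)).prod x : ℕ) = psi i j 0 (x : ℕ) := by
  rw [List.map_flatten, List.prod_flatten, List.map_map, List.map_map]
  have hfun : ((List.prod ∘ List.map (sNp n)) ∘ fun t =>
      (List.range (j + 1)).map fun r => i + t - r) =
      fun t => ((List.range (j + 1)).map (fun r => sNp n (i + t - r))).prod := by
    funext t
    simp only [Function.comp, List.map_map]
    rfl
  rw [hfun]
  set L := (List.range (j + 1)).map
      (fun t => ((List.range (j + 1)).map (fun r => sNp n (i + t - r))).prod) with hL
  have hlen : L.length = j + 1 := by simp [hL]
  have key : ∀ v, 0 ≤ v → v ≤ j + 1 → ∀ y : Fin n,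
      (((L.drop v).prod) y : ℕ) = psi i j v (y : ℕ) := by
    apply down_closed (P := fun v => ∀ y : Fin n, (((L.drop v).prod) y : ℕ) = psi i j v (y : ℕ))
      (lo := 0) (hi := j + 1)
    · intro y
      have hd : L.drop (j + 1) = [] := by
        rw [← hlen]; exact List.drop_length
      rw [hd]
      have hy := y.isLt
      simp only [List.prod_nil, Equiv.Perm.one_apply, psi]
      split_ifs <;> omega
    · intro v _ hv ihv y
      have hvL : v < L.length := by omega
      rw [List.drop_eq_getElem_cons hvL, List.prod_cons, Equiv.Perm.mul_apply]
      have hLv : L[v] = ((List.range (j + 1)).map (fun r => sNp n (i + v - r))).prod := by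
        simp [hL]
      rw [hLv]
      rw [run_eval j (i + v) (by omega) (by omega)]
      rw [ihv y]
      have hy := y.isLt
      simp only [psi]
      split_ifs <;> omega
  have hd0 : L.drop 0 = L := List.drop_zero
  have := key 0 (by omega) (by omega) x
  rwa [hd0] at this


lemma comb_main (n i : ℕ) (hi1 : 1 ≤ i) (hi2 : i + 1 ≤ n) (g g' : ℕ → ℕ)
    (hglt : ∀ k, k < n → g k < n) (hg'lt : ∀ k, k < n → g' k < n)
    (hgg' : ∀ k, k < n → g' (g k) = k) (hg'g : ∀ k, k < n → g (g' k) = k)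
    (hstep : ∀ k, k + 2 ≤ n → (g (k + 1) < g k ↔ k + 1 = i))
    (hstep' : ∀ k, k + 2 ≤ n → (g' (k + 1) < g' k ↔ k + 1 = i)) :
    ∃ j, j + 1 ≤ i ∧ i + j + 1 ≤ n ∧ ∀ k, k < n → g k = psi i j 0 k := by
  obtain ⟨j, a, haj, hjn, hlow, hmid, hhigh⟩ :=
    comb_aux n i hi1 hi2 g g' hglt hg'lt hgg' hg'g hstep hstep'
  obtain ⟨j', a', haj', hjn', hlow', hmid', hhigh'⟩ :=
    comb_aux n i hi1 hi2 g' g hg'lt hglt hg'g hgg' hstep' hstep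
  have hjj : j = j' := by
    rcases lt_trichotomy j j' with h | h | h
    · have h1 := hmid' j' (le_refl j')
      have e : a' + j' = i - 1 := by omega
      rw [e] at h1
      have h2 : g (i + j') = i - 1 := by rw [← h1]; exact hg'g (i - 1) (by omega)
      have h3 := hhigh (i + j') (by omega) (by omega)
      omega
    · exact h
    · have h1 := hhigh' (i + j) (by omega) (by omega)
      have h3 := hmid j (le_refl j)
      have e : a + j = i - 1 := by omega
      rw [e] at h3
      have h4 := hgg' (i - 1) (by omega)
      rw [h3] at h4
      omega
  have haa : a = a' := by omega
  refine ⟨j, by omega, by omega, ?_⟩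
  intro k hk
  rcases lt_or_ge k a with hka | hka
  · rw [hlow k hka, psi]
    rw [if_neg (by omega), if_neg (by omega)]
  · rcases le_or_gt k (i - 1) with hki | hki
    · have := hmid (k - a) (by omega)
      have e : a + (k - a) = k := by omega
      rw [e] at this
      rw [this, psi, if_pos (by omega)]
      omega
    · rcases le_or_gt k (i + j) with hkj | hkj
      · have h1 := hmid' (k - i) (by omega)
        have e1 : i + (k - i) = k := by omega
        rw [e1] at h1
        have h2 := hg'g (a' + (k - i)) (by omega)
        rw [h1] at h2
        rw [h2, psi, if_neg (by omega), if_pos (by omega)]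
        omega
      · rw [hhigh k (by omega) hk, psi]
        rw [if_neg (by omega), if_neg (by omega)]


lemma invCount_of_formula {i j : ℕ} (hij : j + 1 ≤ i) (hn : i + j + 1 ≤ n)
    (z : Equiv.Perm (Fin n)) (hz : ∀ x : Fin n, (z x : ℕ) = psi i j 0 (x : ℕ)) :
    invCount n z = (j + 1) ^ 2 := by
  have hset : (Finset.univ.filter (fun p : Fin n × Fin n => p.1 < p.2 ∧ z p.2 < z p.1))
      = Finset.Icc (⟨i - 1 - j, by omega⟩ : Fin n) ⟨i - 1, by omega⟩ ×ˢ
        Finset.Icc (⟨i, by omega⟩ : Fin n) ⟨i + j, by omega⟩ := by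
    ext ⟨x, y⟩
    simp only [Finset.mem_filter, Finset.mem_univ, true_and, Finset.mem_product,
      Finset.mem_Icc, Fin.le_def, Fin.lt_def]
    have hx := hz x; have hy := hz y
    have hx' := x.isLt; have hy' := y.isLt
    have c1 : ((⟨i - 1 - j, by omega⟩ : Fin n) : ℕ) = i - 1 - j := rfl
    have c2 : ((⟨i - 1, by omega⟩ : Fin n) : ℕ) = i - 1 := rfl
    have c3 : ((⟨i, by omega⟩ : Fin n) : ℕ) = i := rfl
    have c4 : ((⟨i + j, by omega⟩ : Fin n) : ℕ) = i + j := rfl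
    rw [psi] at hx hy
    split_ifs at hx hy <;> omega
  rw [invCount, hset, Finset.card_product, Fin.card_Icc, Fin.card_Icc]
  show (i - 1 + 1 - (i - 1 - j)) * (i + j + 1 - i) = (j + 1) ^ 2
  have e1 : i - 1 + 1 - (i - 1 - j) = j + 1 := by omega
  have e2 : i + j + 1 - i = j + 1 := by omega
  rw [e1, e2, pow_two]

end Inv


/-- Let `λ = (i, 1, …, 1)` be a partition of `n` with first part `i`, and let
`z ∈ S_n` be such that for every simple reflection `s`, `sz < z` iff `s = s_i`
and `zs < z` iff `s = s_i` (i.e. both descent sets of `z` equal `{s_i}`). Then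
there is `0 ≤ j ≤ i - 1` with
`z = (s_i s_{i-1} ⋯ s_{i-j})(s_{i+1} s_i ⋯ s_{i-j+1}) ⋯ (s_{i+j} s_{i+j-1} ⋯ s_i)`,
a reduced expression, so `l(z) = (j+1)^2`. -/
theorem descent_singleton_form (n : ℕ) [NeZero n] (i : ℕ)
    (hi1 : 1 ≤ i) (hi2 : i ≤ n - 1) (z : Equiv.Perm (Fin n))
    (hleft : ∀ j : ℕ, 1 ≤ j → j ≤ n - 1 →
      (lenS n (sNp n j * z) < lenS n z ↔ j = i))
    (hright : ∀ j : ℕ, 1 ≤ j → j ≤ n - 1 →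
      (lenS n (z * sNp n j) < lenS n z ↔ j = i)) :
    ∃ j : ℕ, j ≤ i - 1 ∧
      z = ((((List.range (j + 1)).map (fun t =>
              (List.range (j + 1)).map (fun r => i + t - r))).flatten.map
            (sNp n)).prod) ∧
      lenS n z = (j + 1) ^ 2 := by
  have hn1 := NeZero.pos n
  have hin : i + 1 ≤ n := by omega
  set g := pf n z with hg
  set g' := pf n z⁻¹ with hg'
  have hglt : ∀ k, k < n → g k < n := fun k hk => pf_lt hk
  have hg'lt : ∀ k, k < n → g' k < n := fun k hk => pf_lt hk
  have hgg' : ∀ k, k < n → g' (g k) = k := fun k hk => pf_pf hk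
  have hg'g : ∀ k, k < n → g (g' k) = k := by
    intro k hk
    have h := pf_pf (w := z⁻¹) hk
    rw [inv_inv] at h
    exact h
  have hstep : ∀ k, k + 2 ≤ n → (g (k + 1) < g k ↔ k + 1 = i) := by
    intro k hk
    have h1 := hright (k + 1) (by omega) (by omega)
    have h2 := lenS_right_descent_iff (c := k + 1) (by omega) (by omega) z
    rw [Nat.add_sub_cancel] at h2
    exact h2.symm.trans h1
  have hstep' : ∀ k, k + 2 ≤ n → (g' (k + 1) < g' k ↔ k + 1 = i) := by
    intro k hk
    have h1 := hleft (k + 1) (by omega) (by omega)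
    have h2 := lenS_left_descent_iff (c := k + 1) (by omega) (by omega) z
    rw [Nat.add_sub_cancel] at h2
    exact h2.symm.trans h1
  obtain ⟨j, hj1, hj2, hform⟩ :=
    comb_main n i hi1 hin g g' hglt hg'lt hgg' hg'g hstep hstep'
  have hzval : ∀ x : Fin n, (z x : ℕ) = psi i j 0 (x : ℕ) := by
    intro x
    have h1 := hform (x : ℕ) x.isLt
    have e : g (x : ℕ) = (z x : ℕ) := by
      rw [hg]
      unfold pf
      rw [dif_pos x.isLt]
    rw [← e]
    exact h1
  refine ⟨j, by omega, ?_, ?_⟩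
  · ext x
    have hw := word_eval (n := n) hj1 hj2 x
    rw [hzval x, ← hw]
  · rw [lenS_eq_invCount]
    exact invCount_of_formula hj1 hj2 z hzval
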